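/- Let X be a string of length n over a finite alphabet, partitioned into ℓ consecutive blocks X_1 ⋯ X_ℓ, and also partitioned into m consecutive blocks X^b_1 ⋯ X^b_m each of length at most b. Then Σ_{i=1}^m |X^b_i|·H₀(X^b_i) ≤ Σ_{i=1}^ℓ |X_i|·H₀(X_i) + (ℓ - 1)·b, where H₀ denotes the 0-th order empirical entropy of a string. -/

import Mathlib

open Real

/-- The unnormalized 0-th order empirical entropy `|S|·H₀(S)` of a string `S`
over a finite alphabet: `∑_c n_c log₂(n/n_c)` where `n = |S|` and `n_c` is the
number of occurrences of `c` in `S` (convention `0·log(x/0) = 0`). -/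
noncomputable def lenH0 {A : Type} [Fintype A] [DecidableEq A] (S : List A) : ℝ :=
  ∑ c : A, (S.count c : ℝ) * logb 2 ((S.length : ℝ) / (S.count c : ℝ))

lemma logb_div_sub (x y : ℝ) (hx : 0 < x) (hy : 0 < y) :
    logb 2 (x / y) = (log x - log y) / log 2 := by
  rw [Real.logb, Real.log_div hx.ne' hy.ne']

lemma ptwise_super (a b c d : ℝ) (ha : 0 ≤ a) (hab : a ≤ b) (hc : 0 ≤ c) (hcd : c ≤ d) :
    a * logb 2 (b / a) + c * logb 2 (d / c) ≤ (a + c) * logb 2 ((b + d) / (a + c)) := by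
  have hlog2 : (0:ℝ) < log 2 := Real.log_pos one_lt_two
  rcases eq_or_lt_of_le ha with rfl | ha0
  · simp only [zero_add, zero_mul]
    rcases eq_or_lt_of_le hc with rfl | hc0
    · simp
    · have hd : 0 < d := lt_of_lt_of_le hc0 hcd
      have h : logb 2 (d / c) ≤ logb 2 ((b + d) / c) :=
        Real.logb_le_logb_of_le one_lt_two (by positivity)
          ((div_le_div_iff_of_pos_right hc0).mpr (by linarith))
      simpa using mul_le_mul_of_nonneg_left h hc0.le
  · rcases eq_or_lt_of_le hc with rfl | hc0
    · simp only [add_zero, zero_mul]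
      have hb : 0 < b := lt_of_lt_of_le ha0 hab
      have h : logb 2 (b / a) ≤ logb 2 ((b + d) / a) :=
        Real.logb_le_logb_of_le one_lt_two (by positivity)
          ((div_le_div_iff_of_pos_right ha0).mpr (by linarith))
      simpa using mul_le_mul_of_nonneg_left h ha0.le
    · have hb : 0 < b := lt_of_lt_of_le ha0 hab
      have hd : 0 < d := lt_of_lt_of_le hc0 hcd
      have hM : 0 < a + c := by linarith
      have hN : 0 < b + d := by linarith
      suffices h : a * log (b / a) + c * log (d / c) ≤ (a + c) * log ((b + d) / (a + c)) by
        rw [logb_div_sub b a hb ha0, logb_div_sub d c hd hc0, logb_div_sub _ _ hN hM]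
        rw [Real.log_div hb.ne' ha0.ne', Real.log_div hd.ne' hc0.ne',
          Real.log_div hN.ne' hM.ne'] at h
        calc a * ((log b - log a) / log 2) + c * ((log d - log c) / log 2)
            = (a * (log b - log a) + c * (log d - log c)) / log 2 := by ring
          _ ≤ ((a + c) * (log (b + d) - log (a + c))) / log 2 :=
              (div_le_div_iff_of_pos_right hlog2).mpr h
          _ = (a + c) * ((log (b + d) - log (a + c)) / log 2) := by ring
      have i1 : log (b * (a + c) / (a * (b + d))) ≤ b * (a + c) / (a * (b + d)) - 1 :=
        Real.log_le_sub_one_of_pos (by positivity)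
      have e1 : log (b * (a + c) / (a * (b + d)))
          = log b + log (a + c) - log a - log (b + d) := by
        rw [Real.log_div (by positivity) (by positivity), Real.log_mul hb.ne' hM.ne',
          Real.log_mul ha0.ne' hN.ne']; ring
      have i2 : log (d * (a + c) / (c * (b + d))) ≤ d * (a + c) / (c * (b + d)) - 1 :=
        Real.log_le_sub_one_of_pos (by positivity)
      have e2 : log (d * (a + c) / (c * (b + d)))
          = log d + log (a + c) - log c - log (b + d) := by
        rw [Real.log_div (by positivity) (by positivity), Real.log_mul hd.ne' hM.ne',
          Real.log_mul hc0.ne' hN.ne']; ring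
      rw [e1] at i1; rw [e2] at i2
      have m1 : a * (log b + log (a + c) - log a - log (b + d))
          ≤ b * (a + c) / (b + d) - a := by
        have := mul_le_mul_of_nonneg_left i1 ha0.le
        have r1 : a * (b * (a + c) / (a * (b + d)) - 1) = b * (a + c) / (b + d) - a := by
          field_simp
        linarith [r1 ▸ this]
      have m2 : c * (log d + log (a + c) - log c - log (b + d))
          ≤ d * (a + c) / (c + a) * ((c + a)/(b + d)) - c := by
        have := mul_le_mul_of_nonneg_left i2 hc0.le
        have r2 : c * (d * (a + c) / (c * (b + d))) = d * (a + c) / (c + a) * ((c + a)/(b + d)) := by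
          field_simp
        nlinarith [this]
      have r3 : b * (a + c) / (b + d) + d * (a + c) / (c + a) * ((c + a)/(b + d)) = a + c := by
        field_simp
      rw [Real.log_div hb.ne' ha0.ne', Real.log_div hd.ne' hc0.ne', Real.log_div hN.ne' hM.ne']
      nlinarith [m1, m2, r3]

lemma ptwise_sub (a b c d : ℝ) (ha : 0 ≤ a) (hab : a ≤ b) (hc : 0 ≤ c) (hcd : c ≤ d) :
    (a + c) * logb 2 ((b + d) / (a + c)) ≤
      a * logb 2 (b / a) + c * logb 2 (d / c)
        + a * logb 2 ((b + d) / b) + c * logb 2 ((b + d) / d) := by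
  have hlog2 : (0:ℝ) < log 2 := Real.log_pos one_lt_two
  rcases eq_or_lt_of_le ha with rfl | ha0
  · simp only [zero_add, zero_mul, add_zero]
    rcases eq_or_lt_of_le hc with rfl | hc0
    · simp
    · have hd : 0 < d := lt_of_lt_of_le hc0 hcd
      have : logb 2 ((b + d) / c) = logb 2 (d / c) + logb 2 ((b + d) / d) := by
        rw [logb_div_sub _ _ (by linarith) hc0, logb_div_sub _ _ hd hc0,
          logb_div_sub _ _ (by linarith) hd]
        ring
      rw [this]; ring_nf; rfl
  · rcases eq_or_lt_of_le hc with rfl | hc0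
    · simp only [add_zero, zero_mul]
      have hb : 0 < b := lt_of_lt_of_le ha0 hab
      have : logb 2 ((b + d) / a) = logb 2 (b / a) + logb 2 ((b + d) / b) := by
        rw [logb_div_sub _ _ (by linarith) ha0, logb_div_sub _ _ hb ha0,
          logb_div_sub _ _ (by linarith) hb]
        ring
      rw [this]; ring_nf; rfl
    · have hb : 0 < b := lt_of_lt_of_le ha0 hab
      have hd : 0 < d := lt_of_lt_of_le hc0 hcd
      have hM : 0 < a + c := by linarith
      have hN : 0 < b + d := by linarith
      have la : log a ≤ log (a + c) := Real.log_le_log ha0 (by linarith)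
      have lc : log c ≤ log (a + c) := Real.log_le_log hc0 (by linarith)
      rw [logb_div_sub _ _ hN hM, logb_div_sub _ _ hb ha0, logb_div_sub _ _ hd hc0,
        logb_div_sub _ _ hN hb, logb_div_sub _ _ hN hd]
      rw [← sub_nonneg]
      have e : a * ((log b - log a) / log 2) + c * ((log d - log c) / log 2)
            + a * ((log (b + d) - log b) / log 2) + c * ((log (b + d) - log d) / log 2)
            - (a + c) * ((log (b + d) - log (a + c)) / log 2)
          = (a * (log (a + c) - log a) + c * (log (a + c) - log c)) / log 2 := by ring
      rw [e]
      apply div_nonneg _ hlog2.le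
      nlinarith [mul_le_mul_of_nonneg_left la ha0.le, mul_le_mul_of_nonneg_left lc hc0.le]

variable {A : Type} [Fintype A] [DecidableEq A]

lemma sum_count_real (S : List A) : ∑ c : A, (S.count c : ℝ) = S.length := by
  have h : ∑ c : A, S.count c = S.length := by
    induction S with
    | nil => simp
    | cons a S ih => simp [List.count_cons, Finset.sum_add_distrib, ih, add_comm]
  exact_mod_cast h

lemma lenH0_superadd (S T : List A) : lenH0 S + lenH0 T ≤ lenH0 (S ++ T) := by
  unfold lenH0
  rw [← Finset.sum_add_distrib]
  apply Finset.sum_le_sum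
  intro c _
  have h := ptwise_super (S.count c) S.length (T.count c) T.length
    (by positivity) (by exact_mod_cast (S.count_le_length : S.count c ≤ S.length))
    (by positivity) (by exact_mod_cast (T.count_le_length : T.count c ≤ T.length))
  simpa [List.count_append, List.length_append, Nat.cast_add] using h

lemma ent2 (m k : ℝ) (hm : 0 ≤ m) (hk : 0 ≤ k) :
    m * logb 2 ((m + k) / m) + k * logb 2 ((m + k) / k) ≤ m + k := by
  have hlog2 : (0:ℝ) < log 2 := Real.log_pos one_lt_two
  rcases eq_or_lt_of_le hm with rfl | hm0
  · rcases eq_or_lt_of_le hk with rfl | hk0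
    · simp
    · simp [div_self hk0.ne']
      linarith
  · rcases eq_or_lt_of_le hk with rfl | hk0
    · simp [div_self hm0.ne']
      linarith
    · have hn : 0 < m + k := by linarith
      rw [logb_div_sub _ _ hn hm0, logb_div_sub _ _ hn hk0]
      rw [← sub_nonneg]
      have e : m + k - (m * ((log (m + k) - log m) / log 2) + k * ((log (m + k) - log k) / log 2))
          = -(m * (log (m + k) - log 2 - log m) + k * (log (m + k) - log 2 - log k)) / log 2 := by
        field_simp; ring
      rw [e]
      apply div_nonneg _ hlog2.le
      have i1 : log ((m + k) / (2 * m)) ≤ (m + k) / (2 * m) - 1 :=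
        Real.log_le_sub_one_of_pos (by positivity)
      have e1 : log ((m + k) / (2 * m)) = log (m + k) - log 2 - log m := by
        rw [Real.log_div hn.ne' (by positivity), Real.log_mul two_ne_zero hm0.ne']; ring
      have i2 : log ((m + k) / (2 * k)) ≤ (m + k) / (2 * k) - 1 :=
        Real.log_le_sub_one_of_pos (by positivity)
      have e2 : log ((m + k) / (2 * k)) = log (m + k) - log 2 - log k := by
        rw [Real.log_div hn.ne' (by positivity), Real.log_mul two_ne_zero hk0.ne']; ring
      rw [e1] at i1; rw [e2] at i2
      have m1 := mul_le_mul_of_nonneg_left i1 hm0.le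
      have m2 := mul_le_mul_of_nonneg_left i2 hk0.le
      have r1 : m * ((m + k) / (2 * m) - 1) = (m + k) / 2 - m := by field_simp
      have r2 : k * ((m + k) / (2 * k) - 1) = (m + k) / 2 - k := by field_simp
      rw [r1] at m1; rw [r2] at m2
      nlinarith [m1, m2]

lemma lenH0_subadd (S T : List A) :
    lenH0 (S ++ T) ≤ lenH0 S + lenH0 T + ((S.length : ℝ) + T.length) := by
  have h1 : lenH0 (S ++ T) ≤ lenH0 S + lenH0 T
      + (S.length : ℝ) * logb 2 (((S.length : ℝ) + T.length) / S.length)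
      + (T.length : ℝ) * logb 2 (((S.length : ℝ) + T.length) / T.length) := by
    unfold lenH0
    have key : ∀ c ∈ (Finset.univ : Finset A),
        ((S ++ T).count c : ℝ) * logb 2 (((S ++ T).length : ℝ) / ((S ++ T).count c : ℝ))
        ≤ (S.count c : ℝ) * logb 2 ((S.length : ℝ) / (S.count c : ℝ))
          + (T.count c : ℝ) * logb 2 ((T.length : ℝ) / (T.count c : ℝ))
          + (S.count c : ℝ) * logb 2 (((S.length : ℝ) + T.length) / S.length)
          + (T.count c : ℝ) * logb 2 (((S.length : ℝ) + T.length) / T.length) := by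
      intro c _
      have h := ptwise_sub (S.count c) S.length (T.count c) T.length
        (by positivity) (by exact_mod_cast (S.count_le_length : S.count c ≤ S.length))
        (by positivity) (by exact_mod_cast (T.count_le_length : T.count c ≤ T.length))
      simpa [List.count_append, List.length_append, Nat.cast_add] using h
    calc ∑ c : A, ((S ++ T).count c : ℝ) * logb 2 (((S ++ T).length : ℝ) / ((S ++ T).count c : ℝ))
        ≤ ∑ c : A, ((S.count c : ℝ) * logb 2 ((S.length : ℝ) / (S.count c : ℝ))
          + (T.count c : ℝ) * logb 2 ((T.length : ℝ) / (T.count c : ℝ))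
          + (S.count c : ℝ) * logb 2 (((S.length : ℝ) + T.length) / S.length)
          + (T.count c : ℝ) * logb 2 (((S.length : ℝ) + T.length) / T.length)) :=
          Finset.sum_le_sum key
      _ = (∑ c : A, (S.count c : ℝ) * logb 2 ((S.length : ℝ) / (S.count c : ℝ)))
          + (∑ c : A, (T.count c : ℝ) * logb 2 ((T.length : ℝ) / (T.count c : ℝ)))
          + (∑ c : A, (S.count c : ℝ)) * logb 2 (((S.length : ℝ) + T.length) / S.length)
          + (∑ c : A, (T.count c : ℝ)) * logb 2 (((S.length : ℝ) + T.length) / T.length) := by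
          simp [Finset.sum_add_distrib, Finset.sum_mul]
      _ = _ := by rw [sum_count_real, sum_count_real]
  have h2 := ent2 (S.length : ℝ) (T.length : ℝ) (by positivity) (by positivity)
  linarith

lemma lenH0_nil : lenH0 ([] : List A) = 0 := by simp [lenH0]

lemma aux_main (b : ℕ) :
    ∀ n (Xb Xs : List (List A)), Xb.length + Xs.length ≤ n → Xs ≠ [] →
      Xb.flatten = Xs.flatten → (∀ B ∈ Xb, B.length ≤ b) →
      (Xb.map lenH0).sum ≤ (Xs.map lenH0).sum + ((Xs.length : ℝ) - 1) * (b : ℝ) := by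
  intro n
  induction n with
  | zero =>
    intro Xb Xs hn hne _ _
    cases Xs with
    | nil => exact absurd rfl hne
    | cons X₁ Xs' => simp only [List.length_cons] at hn; omega
  | succ n ih =>
    intro Xb Xs hn hne hflat hb
    cases Xs with
    | nil => exact absurd rfl hne
    | cons X₁ Xs' =>
      cases Xb with
      | nil =>
        have hnil : ∀ L ∈ X₁ :: Xs', L = [] := by
          simpa [List.flatten_eq_nil_iff] using hflat.symm
        have hsum : ((X₁ :: Xs').map lenH0).sum = 0 := by
          apply List.sum_eq_zero
          intro x hx
          obtain ⟨L, hL, rfl⟩ := List.mem_map.mp hx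
          rw [hnil L hL, lenH0_nil]
        rw [hsum]
        simp only [List.map_nil, List.sum_nil, List.length_cons]
        have : ((Xs'.length + 1 : ℕ) : ℝ) - 1 = (Xs'.length : ℝ) := by push_cast; ring
        rw [this]
        positivity
      | cons B Xb' =>
        simp only [List.flatten_cons] at hflat
        by_cases hle : B.length ≤ X₁.length
        · -- B fits inside X₁
          have htake : (B ++ Xb'.flatten).take B.length = B := by
            rw [List.take_append_of_le_length le_rfl, List.take_length]
          have hBtake : B = X₁.take B.length := by
            have := congrArg (List.take B.length) hflat
            rw [htake, List.take_append_of_le_length hle] at this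
            exact this
          have hdrop : Xb'.flatten = X₁.drop B.length ++ Xs'.flatten := by
            have := congrArg (List.drop B.length) hflat
            rw [List.drop_append_of_le_length le_rfl, List.drop_length, List.nil_append,
              List.drop_append_of_le_length hle] at this
            exact this
          have ihh := ih Xb' (X₁.drop B.length :: Xs')
            (by simp only [List.length_cons] at hn ⊢; omega)
            (List.cons_ne_nil _ _)
            (by simpa [List.flatten_cons] using hdrop)
            (fun C hC => hb C (List.mem_cons_of_mem _ hC))
          have hsup : lenH0 (X₁.take B.length) + lenH0 (X₁.drop B.length) ≤ lenH0 X₁ := by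
            have := lenH0_superadd (X₁.take B.length) (X₁.drop B.length)
            rwa [List.take_append_drop] at this
          rw [← hBtake] at hsup
          simp only [List.map_cons, List.sum_cons, List.length_cons] at ihh ⊢
          linarith
        · -- X₁ is a proper prefix of B
          push_neg at hle
          have hne' : Xs' ≠ [] := by
            rintro rfl
            simp only [List.flatten_nil, List.append_nil] at hflat
            have := congrArg List.length hflat
            simp only [List.length_append] at this
            omega
          have hX1 : X₁ = B.take X₁.length := by
            have := congrArg (List.take X₁.length) hflat
            rw [List.take_append_of_le_length hle.le, List.take_append_of_le_length le_rfl,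
              List.take_length] at this
            exact this.symm
          have hrest : (B.drop X₁.length) ++ Xb'.flatten = Xs'.flatten := by
            have := congrArg (List.drop X₁.length) hflat
            rw [List.drop_append_of_le_length hle.le, List.drop_append_of_le_length le_rfl,
              List.drop_length, List.nil_append] at this
            exact this
          have hBdec : B = X₁ ++ B.drop X₁.length := by
            conv_lhs => rw [← List.take_append_drop X₁.length B]
            rw [← hX1]
          have hBlen : B.length ≤ b := hb B List.mem_cons_self
          have hsplit : lenH0 B ≤ lenH0 X₁ + lenH0 (B.drop X₁.length) + (b : ℝ) := by
            have h1 := lenH0_subadd X₁ (B.drop X₁.length)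
            rw [← hBdec] at h1
            have hlen2 : (X₁.length : ℝ) + ((B.drop X₁.length).length : ℝ) ≤ (b : ℝ) := by
              rw [List.length_drop]
              exact_mod_cast (by omega : X₁.length + (B.length - X₁.length) ≤ b)
            linarith
          have ihh := ih (B.drop X₁.length :: Xb') Xs'
            (by simp only [List.length_cons] at hn ⊢; omega)
            hne'
            (by simpa [List.flatten_cons] using hrest)
            (by
              intro C hC
              rcases List.mem_cons.mp hC with rfl | hC'
              · exact le_trans (by simp only [List.length_drop]; omega) hBlen
              · exact hb C (List.mem_cons_of_mem _ hC'))
          simp only [List.map_cons, List.sum_cons, List.length_cons] at ihh ⊢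
          have hls : (1:ℝ) ≤ (Xs'.length : ℝ) := by
            have := List.length_pos_iff.mpr hne'
            exact_mod_cast this
          push_cast at ihh ⊢
          nlinarith [ihh, hsplit]


/-- **fixed block compression boosting.**
If a string `X` is partitioned into `ℓ ≥ 1` consecutive blocks `X_1 ⋯ X_ℓ` and also
into consecutive blocks `X^b_1 ⋯ X^b_m` each of length at most `b`, then
`∑_i |X^b_i| H₀(X^b_i) ≤ ∑_i |X_i| H₀(X_i) + (ℓ - 1) b`. -/
theorem fixed_block_compression_boosting
    {A : Type} [Fintype A] [DecidableEq A]
    (Xs Xb : List (List A)) (b : ℕ)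
    (hXs : Xs ≠ [])
    (hjoin : Xb.flatten = Xs.flatten)
    (hlen : ∀ B ∈ Xb, B.length ≤ b) :
    (Xb.map lenH0).sum ≤ (Xs.map lenH0).sum + ((Xs.length : ℝ) - 1) * (b : ℝ) := by
  exact aux_main b (Xb.length + Xs.length) Xb Xs le_rfl hXs hjoin hlen
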